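/- Let E be a measurable space, N ≥ 1, and let (X_1, …, X_N) be exchangeable E-valued random variables on a probability space. Let S : E^N → (finite subsets of {1,…,N}) be measurable and equivariant, meaning that for every permutation σ of {1,…,N} and every x ∈ E^N, j ∈ S(x ∘ σ) if and only if σ(j) ∈ S(x), where (x ∘ σ)_i = x_{σ(i)}. Then for every index i, P[ i ∈ S(X_1,…,X_N) ] = E[ |S(X_1,…,X_N)| ] / N. In particular, if there is an integer m with |S(x)| ≤ m for all x ∈ E^N, then P[ i ∈ S(X_1,…,X_N) ] ≤ m/N for every i. -/

import Mathlib

open MeasureTheory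
open scoped Classical

/-- For exchangeable random variables `X = (X 1, …, X N)` and an equivariant
measurable set-valued selection `S`, the probability that index `i` belongs to
`S X` equals `E[|S X|] / N`; in particular, if `|S x| ≤ m` always, this
probability is at most `m / N`. -/
theorem equivariant_selection_prob {Ω E : Type*} [MeasurableSpace Ω] [MeasurableSpace E]
    (P : Measure Ω) [IsProbabilityMeasure P]
    (N : ℕ) (hN : 1 ≤ N)
    (X : Ω → Fin N → E) (hX : Measurable X)
    (hexch : ∀ σ : Equiv.Perm (Fin N),
      Measure.map (fun ω => fun i => X ω (σ i)) P = Measure.map X P)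
    (S : (Fin N → E) → Finset (Fin N))
    (hSmeas : ∀ i : Fin N, MeasurableSet {x : Fin N → E | i ∈ S x})
    (hequiv : ∀ (σ : Equiv.Perm (Fin N)) (x : Fin N → E) (j : Fin N),
      j ∈ S (fun i => x (σ i)) ↔ σ j ∈ S x) :
    ∀ i : Fin N,
      (P {ω | i ∈ S (X ω)}).toReal = (∫ ω, ((S (X ω)).card : ℝ) ∂P) / N ∧
      (∀ m : ℕ, (∀ x : Fin N → E, (S x).card ≤ m) →
        (P {ω | i ∈ S (X ω)}).toReal ≤ (m : ℝ) / N) := by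
  -- measurability of the preimage events
  have hmeasA : ∀ j : Fin N, MeasurableSet {ω | j ∈ S (X ω)} := fun j => hX (hSmeas j)
  -- all indices have the same probability
  have hkey : ∀ i j : Fin N, P {ω | i ∈ S (X ω)} = P {ω | j ∈ S (X ω)} := by
    intro i j
    set σ := Equiv.swap i j with hσ
    have hXσ : Measurable fun ω => fun k => X ω (σ k) :=
      measurable_pi_lambda _ (fun k => (measurable_pi_apply (σ k)).comp hX)
    have h1 : P {ω | j ∈ S (X ω)} = Measure.map X P {x | j ∈ S x} := by
      rw [Measure.map_apply hX (hSmeas j)]; rfl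
    have h2 : Measure.map X P {x | j ∈ S x}
        = Measure.map (fun ω => fun k => X ω (σ k)) P {x | j ∈ S x} := by
      rw [hexch σ]
    have h3 : Measure.map (fun ω => fun k => X ω (σ k)) P {x | j ∈ S x}
        = P {ω | j ∈ S (fun k => X ω (σ k))} := by
      rw [Measure.map_apply hXσ (hSmeas j)]; rfl
    have h4 : {ω | j ∈ S (fun k => X ω (σ k))} = {ω | i ∈ S (X ω)} := by
      ext ω
      simp only [Set.mem_setOf_eq]; rw [hequiv σ (X ω) j, hσ, Equiv.swap_apply_right]
    rw [h1, h2, h3, h4]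
  intro i
  -- integrability of indicators
  have hint : ∀ j : Fin N,
      Integrable (fun ω => if j ∈ S (X ω) then (1 : ℝ) else 0) P := by
    intro j
    have : (fun ω => if j ∈ S (X ω) then (1 : ℝ) else 0)
        = Set.indicator {ω | j ∈ S (X ω)} (fun _ => (1 : ℝ)) := by
      ext ω; by_cases h : j ∈ S (X ω) <;> simp [Set.indicator, h]
    rw [this]
    exact (integrable_const (1 : ℝ)).indicator (hmeasA j)
  -- the integral of the cardinality
  have hcard : (∫ ω, ((S (X ω)).card : ℝ) ∂P)
      = ∑ j : Fin N, (P {ω | j ∈ S (X ω)}).toReal := by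
    have hrw : ∀ ω, ((S (X ω)).card : ℝ)
        = ∑ j : Fin N, (if j ∈ S (X ω) then (1 : ℝ) else 0) := by
      intro ω
      rw [Finset.sum_boole]
      congr 1
      rw [Finset.filter_mem_eq_inter, Finset.univ_inter]
    calc (∫ ω, ((S (X ω)).card : ℝ) ∂P)
        = ∫ ω, ∑ j : Fin N, (if j ∈ S (X ω) then (1 : ℝ) else 0) ∂P := by
          exact integral_congr_ae (Filter.Eventually.of_forall hrw)
      _ = ∑ j : Fin N, ∫ ω, (if j ∈ S (X ω) then (1 : ℝ) else 0) ∂P := by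
          exact integral_finset_sum _ (fun j _ => hint j)
      _ = ∑ j : Fin N, (P {ω | j ∈ S (X ω)}).toReal := by
          refine Finset.sum_congr rfl (fun j _ => ?_)
          have : (fun ω => if j ∈ S (X ω) then (1 : ℝ) else 0)
              = Set.indicator {ω | j ∈ S (X ω)} (fun _ => (1 : ℝ)) := by
            ext ω; by_cases h : j ∈ S (X ω) <;> simp [Set.indicator, h]
          rw [this, integral_indicator_const _ (hmeasA j)]
          simp; rfl
  have hsum : ∑ j : Fin N, (P {ω | j ∈ S (X ω)}).toReal
      = N * (P {ω | i ∈ S (X ω)}).toReal := by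
    rw [Finset.sum_congr rfl (fun j _ => by rw [hkey j i])]
    simp [Finset.sum_const, Finset.card_univ]
  have hNpos : (0 : ℝ) < N := by exact_mod_cast hN
  have hmain : (P {ω | i ∈ S (X ω)}).toReal = (∫ ω, ((S (X ω)).card : ℝ) ∂P) / N := by
    rw [hcard, hsum]
    field_simp
  refine ⟨hmain, fun m hm => ?_⟩
  rw [hmain]
  have hle : (∫ ω, ((S (X ω)).card : ℝ) ∂P) ≤ m := by
    have : (∫ ω, ((S (X ω)).card : ℝ) ∂P) ≤ ∫ _ω, (m : ℝ) ∂P := by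
      apply integral_mono_of_nonneg
      · exact Filter.Eventually.of_forall (fun ω => Nat.cast_nonneg _)
      · exact integrable_const _
      · exact Filter.Eventually.of_forall (fun ω => by simp only []; exact_mod_cast hm (X ω))
    simpa using this
  gcongr
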